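/- In any two-dimensional normed space there exist unit vectors x, y, z with x + y + z = 0; consequently {2x, 2y, 2z} is an M-set of size 3. -/

import Mathlib

def IsMSet (X : Type*) [NormedAddCommGroup X] (S : Set X) : Prop :=
  (∀ x ∈ S, 1 < ‖x‖) ∧ ∀ x ∈ S, ∀ y ∈ S, x ≠ y → ‖x + y‖ = 2

theorem unit_vectors_sum_zero_two_dim
    (X : Type*) [NormedAddCommGroup X] [NormedSpace ℝ X]
    (hdim : Module.finrank ℝ X = 2) :
    ∃ x y z : X, ‖x‖ = 1 ∧ ‖y‖ = 1 ∧ ‖z‖ = 1 ∧ x + y + z = 0 ∧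
      IsMSet X {(2 : ℝ) • x, (2 : ℝ) • y, (2 : ℝ) • z} ∧
      ({(2 : ℝ) • x, (2 : ℝ) • y, (2 : ℝ) • z} : Set X).ncard = 3 := by
  have : FiniteDimensional ℝ X := Module.finite_of_finrank_eq_succ hdim
  have b : Module.Basis (Fin 2) ℝ X := Module.finBasisOfFinrankEq ℝ X hdim
  set e1 := b 0 with he1
  set e2 := b 1 with he2
  -- the curve
  set c : ℝ → X := fun θ => Real.cos θ • e1 + Real.sin θ • e2 with hc
  have hindep := b.linearIndependent
  have hcne : ∀ θ, c θ ≠ 0 := by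
    intro θ h0
    have := (Fintype.linearIndependent_iff.mp hindep) ![Real.cos θ, Real.sin θ]
      (by simpa [Fin.sum_univ_two, hc] using h0)
    have hcos : Real.cos θ = 0 := this 0
    have hsin : Real.sin θ = 0 := this 1
    have := Real.sin_sq_add_cos_sq θ
    rw [hcos, hsin] at this; norm_num at this
  have hcnorm : ∀ θ, ‖c θ‖ ≠ 0 := fun θ => norm_ne_zero_iff.mpr (hcne θ)
  set v : ℝ → X := fun θ => ‖c θ‖⁻¹ • c θ with hv
  have hvnorm : ∀ θ, ‖v θ‖ = 1 := by
    intro θ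
    rw [hv]
    simp only [norm_smul, norm_inv, norm_norm]
    exact inv_mul_cancel₀ (hcnorm θ)
  have hccont : Continuous c := by
    apply Continuous.add
    · exact Real.continuous_cos.smul continuous_const
    · exact Real.continuous_sin.smul continuous_const
  have hvcont : Continuous v := by
    apply Continuous.smul
    · exact (hccont.norm.inv₀ hcnorm)
    · exact hccont
  have hv0 : v 0 = ‖e1‖⁻¹ • e1 := by simp [hv, hc]
  have hvpi : v Real.pi = -v 0 := by
    have hpi : c Real.pi = -e1 := by simp [hc]
    have h0 : c 0 = e1 := by simp [hc]
    rw [hv]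
    simp only [hpi, h0, norm_neg, smul_neg]
  set f : ℝ → ℝ := fun θ => ‖v 0 + v θ‖ with hf
  have hfcont : Continuous f := (continuous_const.add hvcont).norm
  have hf0 : f 0 = 2 := by
    rw [hf]
    simp only
    rw [← two_smul ℝ (v 0), norm_smul]
    simp [hvnorm 0]
  have hfpi : f Real.pi = 0 := by
    rw [hf]; simp [hvpi]
  have h1 : (1 : ℝ) ∈ Set.Icc (f Real.pi) (f 0) := by
    rw [hf0, hfpi]; norm_num
  obtain ⟨θ, -, hθ⟩ := intermediate_value_Icc' Real.pi_nonneg hfcont.continuousOn h1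
  -- now set x, y, z
  refine ⟨v 0, v θ, -(v 0 + v θ), hvnorm 0, hvnorm θ, by rw [norm_neg]; exact hθ, by abel, ?_, ?_⟩
  · set x := v 0
    set y := v θ
    set z := -(x + y) with hz
    have hnx : ‖x‖ = 1 := hvnorm 0
    have hny : ‖y‖ = 1 := hvnorm θ
    have hnz : ‖z‖ = 1 := by rw [hz, norm_neg]; exact hθ
    have n2 : ∀ w : X, ‖w‖ = 1 → ‖(2:ℝ) • w‖ = 2 := by
      intro w hw; rw [norm_smul, hw]; norm_num
    constructor
    · intro w hw
      have : ‖w‖ = 2 := by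
        rcases hw with rfl | rfl | rfl
        · exact n2 x hnx
        · exact n2 y hny
        · exact n2 z hnz
      rw [this]; norm_num
    · intro u hu w hw huw
      have hxy : (2:ℝ) • x + (2:ℝ) • y = -((2:ℝ) • z) := by
        rw [hz]; module
      have hxz : (2:ℝ) • x + (2:ℝ) • z = -((2:ℝ) • y) := by
        rw [hz]; module
      have hyz : (2:ℝ) • y + (2:ℝ) • z = -((2:ℝ) • x) := by
        rw [hz]; module
      rcases hu with rfl | rfl | rfl <;> rcases hw with rfl | rfl | rfl <;>
        first
        | exact absurd rfl huw
        | (rw [hxy, norm_neg]; exact n2 z hnz)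
        | (rw [hxz, norm_neg]; exact n2 y hny)
        | (rw [hyz, norm_neg]; exact n2 x hnx)
        | (rw [add_comm, hxy, norm_neg]; exact n2 z hnz)
        | (rw [add_comm, hxz, norm_neg]; exact n2 y hny)
        | (rw [add_comm, hyz, norm_neg]; exact n2 x hnx)
  · set x := v 0
    set y := v θ
    set z := -(x + y) with hz
    have hnx : ‖x‖ = 1 := hvnorm 0
    have hny : ‖y‖ = 1 := hvnorm θ
    have hnz : ‖z‖ = 1 := by rw [hz, norm_neg]; exact hθ
    have hθ' : ‖x + y‖ = 1 := hθ
    have hxy : x ≠ y := by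
      intro h
      have h2 : ‖x + y‖ = 2 := by
        rw [← h, ← two_smul ℝ x, norm_smul, hnx]; norm_num
      rw [hθ'] at h2; norm_num at h2
    have hxz : x ≠ z := by
      intro h
      rw [hz] at h
      have h2 : y = (-2 : ℝ) • x := by linear_combination (norm := module) h
      have h3 := congrArg norm h2
      rw [hny, norm_smul, hnx] at h3
      norm_num at h3
    have hyz : y ≠ z := by
      intro h
      rw [hz] at h
      have h2 : x = (-2 : ℝ) • y := by linear_combination (norm := module) h
      have h3 := congrArg norm h2
      rw [hnx, norm_smul, hny] at h3
      norm_num at h3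
    have hinj : Function.Injective (fun w : X => (2:ℝ) • w) :=
      fun a b h => by
        have := smul_right_injective X (two_ne_zero (α := ℝ)) h
        exact this
    rw [Set.ncard_eq_three]
    exact ⟨_, _, _, fun h => hxy (hinj h), fun h => hxz (hinj h), fun h => hyz (hinj h), rfl⟩
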